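/- Define w'(z) := ⌈cn_{z⋄}(z)⌉ for every z ∈ M. Then w' is a feasible machine configuration for 𝒥, and its cost satisfies ∑_{z ∈ M} w'(z)·r(z) ≤ (8/7)·∑_{z ∈ T(z⋄)} cn_{z⋄}(z)·r(z). -/

import Mathlib

open scoped Classical
open Finset MeasureTheory

namespace BSHM

noncomputable section

/-- The set of candidate parents of machine type `i`: types `j ∈ M` with `j > i`
and a strictly smaller normalized cost rate per capacity unit. -/
def pset (m : ℕ) (g r : ℕ → ℝ) (i : ℕ) : Set ℕ :=
  {j | j ≤ m ∧ i < j ∧ r j / g j < r i / g i}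

/-- The parent `p i` of machine type `i` (equal to `0` when the parent is undefined,
since any actual parent has index `≥ 2`). -/
def p (m : ℕ) (g r : ℕ → ℝ) (i : ℕ) : ℕ := sInf (pset m g r i)

/-- `pdef i` asserts that the parent of `i` is defined. -/
def pdef (m : ℕ) (g r : ℕ → ℝ) (i : ℕ) : Prop := (pset m g r i).Nonempty

/-- One step of the parent relation: `b` is the (defined) parent of `a`. -/
def pstep (m : ℕ) (g r : ℕ → ℝ) (a b : ℕ) : Prop :=
  pdef m g r a ∧ b = p m g r a

/-- `P i`: the set consisting of `i` together with all of its iterated parents. -/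
def P (m : ℕ) (g r : ℕ → ℝ) (i : ℕ) : Set ℕ :=
  {z | Relation.ReflTransGen (pstep m g r) i z}

/-- `A i`: the set of nodes in the tree rooted at `i`,
i.e. all `z ∈ M` having `i` as an ancestor (or equal to `i`). -/
def A (m : ℕ) (g r : ℕ → ℝ) (i : ℕ) : Set ℕ :=
  {z | 1 ≤ z ∧ z ≤ m ∧ i ∈ P m g r z}

/-- `v i`: the lowest-indexed node in the tree rooted at `i`. -/
def v (m : ℕ) (g r : ℕ → ℝ) (i : ℕ) : ℕ := sInf (A m g r i)

/-- `y i`: the younger siblings of `i` (same parent status, smaller index). -/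
def y (m : ℕ) (g r : ℕ → ℝ) (i : ℕ) : Set ℕ :=
  {z | 1 ≤ z ∧ z ≤ m ∧ z < i ∧ p m g r z = p m g r i}

/-- `esib i`: the elder siblings of `i`. -/
def esib (m : ℕ) (g r : ℕ → ℝ) (i : ℕ) : Set ℕ :=
  {z | 1 ≤ z ∧ z ≤ m ∧ i < z ∧ p m g r z = p m g r i}

/-- `T k := {k} ∪ ⋃_{z ∈ P(k)} y(z)`. -/
def T (m : ℕ) (g r : ℕ → ℝ) (k : ℕ) : Set ℕ :=
  {k} ∪ ⋃ z ∈ P m g r k, y m g r z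

/-- `T k` as a `Finset` (all relevant nodes lie in `{k} ∪ [1, m]`). -/
def TIcc (m : ℕ) (g r : ℕ → ℝ) (k : ℕ) : Finset ℕ :=
  (insert k (Finset.Icc 1 m)).filter (fun z => z ∈ T m g r k)

/-! ### Jobs and one-shot scheduling -/

variable {ι : Type*}

/-- The exact machine type of a job `J`: the least `z ∈ M` with `s J ≤ g z`. -/
def mty (m : ℕ) (g : ℕ → ℝ) (s : ι → ℝ) (J : ι) : ℕ :=
  sInf {z | 1 ≤ z ∧ z ≤ m ∧ s J ≤ g z}

/-- Total size of a finite set of jobs. -/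
def Ssum (s : ι → ℝ) (W : Finset ι) : ℝ := ∑ J ∈ W, s J

/-- `k0f X`: the highest-indexed exact machine type among the jobs of `X`. -/
def k0f (m : ℕ) (g : ℕ → ℝ) (s : ι → ℝ) (X : Finset ι) : ℕ :=
  X.sup (fun J => mty m g s J)

/-- `H z X`: the jobs of `X` whose exact machine type lies in the tree rooted at `z`. -/
def H (m : ℕ) (g r : ℕ → ℝ) (s : ι → ℝ) (z : ℕ) (X : Finset ι) : Finset ι :=
  X.filter (fun J => mty m g s J ∈ A m g r z)

/-- `SH X z := S(H_z(X))`. -/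
def SH (m : ℕ) (g r : ℕ → ℝ) (s : ι → ℝ) (X : Finset ι) (z : ℕ) : ℝ :=
  Ssum s (H m g r s z X)

/-- Feasibility of a machine configuration `w : M → ℕ` for the job set `X`. -/
def Feasible (m : ℕ) (g : ℕ → ℝ) (s : ι → ℝ) (X : Finset ι) (w : ℕ → ℕ) : Prop :=
  ∀ i, 1 ≤ i → i ≤ m →
    Ssum s (X.filter (fun J => i ≤ mty m g s J)) ≤ ∑ z ∈ Finset.Icc i m, (w z : ℝ) * g z

/-- The cost of a machine configuration. -/
def cost (m : ℕ) (r : ℕ → ℝ) (w : ℕ → ℕ) : ℝ :=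
  ∑ z ∈ Finset.Icc 1 m, (w z : ℝ) * r z

/-- The optimal one-shot scheduling cost for a job set `X`. -/
def OPT1 (m : ℕ) (g r : ℕ → ℝ) (s : ι → ℝ) (X : Finset ι) : ℝ :=
  sInf {c : ℝ | ∃ w : ℕ → ℕ, Feasible m g s X w ∧ c = cost m r w}

/-- The fractional machine configuration `cn_{z*}` for the job set `X`, with
highest-indexed machine type `zs`.  A node `i ∈ T(zs) \ {zs}` is the boundary
type `i*` exactly when `∑_{z ∈ T(zs), z > i} S(H_z) ≤ cn(zs)·g(zs) <
∑_{z ∈ T(zs), z ≥ i} S(H_z)`; nodes above the boundary get `0`,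
nodes below it get `S(H_i)/g_i`. -/
def cn (m : ℕ) (g r : ℕ → ℝ) (s : ι → ℝ) (X : Finset ι) (zs i : ℕ) : ℝ :=
  let B : ℝ := (⌈SH m g r s X zs / g zs⌉₊ : ℝ) * g zs
  let Sge : ℝ := ∑ z ∈ (TIcc m g r zs).filter (fun z => i ≤ z), SH m g r s X z
  let Sgt : ℝ := ∑ z ∈ (TIcc m g r zs).filter (fun z => i < z), SH m g r s X z
  if i = zs then (⌈SH m g r s X zs / g zs⌉₊ : ℝ)
  else if i ∈ T m g r zs then
    (if Sgt ≤ B ∧ B < Sge then (Sge - B) / g i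
     else if B < Sgt then SH m g r s X i / g i
     else 0)
  else 0

/-- `cn_{zs}` is decent: for every strict ancestor `zt` of `zs`, the total cost of
the machines of types in `T(zs) ∩ A(zt)` is at most the cost of one type-`zt` machine. -/
def decent (m : ℕ) (g r : ℕ → ℝ) (s : ι → ℝ) (X : Finset ι) (zs : ℕ) : Prop :=
  ∀ zt ∈ P m g r zs, zt ≠ zs →
    (∑ z ∈ (TIcc m g r zs).filter (fun z => z ∈ A m g r zt), cn m g r s X zs z * r z) ≤ r zt

/-- `z⋄(X)`: the least `z* ∈ P(k0(X))` such that `cn_{z*}` is decent. -/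
def zdia (m : ℕ) (g r : ℕ → ℝ) (s : ι → ℝ) (X : Finset ι) : ℕ :=
  sInf {zs | zs ∈ P m g r (k0f m g s X) ∧ decent m g r s X zs}

/-- The child of `zd` whose subtree contains node `k`. -/
def chil (m : ℕ) (g r : ℕ → ℝ) (zd k : ℕ) : ℕ :=
  sInf {i | p m g r i = zd ∧ k ∈ A m g r i}

/-- The node `i ∈ T(zd)` whose subtree contains node `k`. -/
def idxT (m : ℕ) (g r : ℕ → ℝ) (zd k : ℕ) : ℕ :=
  sInf {i | i ∈ T m g r zd ∧ k ∈ A m g r i}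

/-- The children `f(zd)` of node `zd`, as a `Finset`. -/
def fchFin (m : ℕ) (g r : ℕ → ℝ) (zd : ℕ) : Finset ℕ :=
  (Finset.Icc 1 m).filter (fun z => p m g r z = zd)

/-- The cost `r̃(X)(J)` charged to the job `J` of the job set `X`. -/
def charge (m : ℕ) (g r : ℕ → ℝ) (s : ι → ℝ) (X : Finset ι) (J : ι) : ℝ :=
  let zd := zdia m g r s X
  let ρ : ℕ → ℝ := fun i => r i / g i
  let Hh := X.filter (fun J' => mty m g s J' = zd)
  let c : ℝ := Ssum s Hh * ρ zd + ∑ i ∈ fchFin m g r zd, SH m g r s X i * ρ i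
  if mty m g s J ∈ A m g r zd then
    if g zd ≤ SH m g r s X zd then s J * ρ zd
    else if r zd < c then
      if mty m g s J = zd then s J * ρ zd
      else
        s J * (ρ (chil m g r zd (mty m g s J)) -
          (ρ (chil m g r zd (mty m g s J)) - ρ zd) *
            ((c - r zd) /
              (∑ i ∈ fchFin m g r zd, ∑ J' ∈ H m g r s i X, s J' * (ρ i - ρ zd))))
    else
      if mty m g s J = zd then s J * ρ zd * (1 + (r zd - c) / (Ssum s Hh * ρ zd))
      else s J * ρ (chil m g r zd (mty m g s J))
  else s J * ρ (idxT m g r zd (mty m g s J))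

end

end BSHM

namespace BSHM


/-! ### Auxiliary lemmas -/

section StructuralLemmas

variable {m : ℕ} {g r : ℕ → ℝ} {i j k b z w t a : ℕ}

lemma p_mem (h : pdef m g r i) : p m g r i ∈ pset m g r i := Nat.sInf_mem h

lemma p_le_m (h : pdef m g r i) : p m g r i ≤ m := (p_mem h).1

lemma lt_p (h : pdef m g r i) : i < p m g r i := (p_mem h).2.1

lemma rho_p_lt (h : pdef m g r i) :
    r (p m g r i) / g (p m g r i) < r i / g i := (p_mem h).2.2

lemma p_min (h : j ∈ pset m g r i) : p m g r i ≤ j := Nat.sInf_le h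

lemma rho_le_of_between (hd : pdef m g r i) (h1 : i < j) (h2 : j < p m g r i) :
    r i / g i ≤ r j / g j := by
  by_contra h
  exact absurd (p_min ⟨le_trans (le_of_lt h2) (p_le_m hd), h1, lt_of_not_ge h⟩)
    (not_le.mpr h2)

lemma pdef_of_between (hd : pdef m g r i) (h1 : i < j) (h2 : j < p m g r i) :
    pdef m g r j ∧ p m g r j ≤ p m g r i := by
  have hmem : p m g r i ∈ pset m g r j :=
    ⟨p_le_m hd, h2, lt_of_lt_of_le (rho_p_lt hd) (rho_le_of_between hd h1 h2)⟩
  exact ⟨⟨_, hmem⟩, p_min hmem⟩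

lemma P_refl (k : ℕ) : k ∈ P m g r k := Relation.ReflTransGen.refl

lemma le_of_mem_P (h : b ∈ P m g r k) : k ≤ b := by
  induction h with
  | refl => exact le_refl _
  | tail _ hstep ih => exact le_trans ih (le_of_lt (hstep.2 ▸ lt_p hstep.1))

lemma P_trans (h1 : b ∈ P m g r k) (h2 : c ∈ P m g r b) : c ∈ P m g r k :=
  Relation.ReflTransGen.trans h1 h2

lemma p_mem_P (h : b ∈ P m g r k) (hd : pdef m g r b) : p m g r b ∈ P m g r k :=
  Relation.ReflTransGen.tail h ⟨hd, rfl⟩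

lemma P_total {c : ℕ} (ha : a ∈ P m g r k) (hb : c ∈ P m g r k) :
    a ∈ P m g r c ∨ c ∈ P m g r a := by
  have hru : Relator.RightUnique (pstep m g r) := by
    intro x u v hu hv; rw [hu.2, hv.2]
  rcases Relation.ReflTransGen.total_of_right_unique hru ha hb with h | h
  · exact Or.inr h
  · exact Or.inl h

lemma P_singleton (hnd : ¬ pdef m g r k) (h : b ∈ P m g r k) : b = k := by
  rcases Relation.ReflTransGen.cases_head h with h | ⟨c, hstep, _⟩
  · exact h.symm
  · exact absurd hstep.1 hnd

lemma not_mem_P_of_sib (hzw : z < w) (hp : p m g r z = p m g r w) :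
    w ∉ P m g r z := by
  intro h
  rcases Relation.ReflTransGen.cases_head h with h | ⟨c, hstep, htl⟩
  · exact absurd h (Nat.ne_of_lt hzw)
  · have hle : p m g r z ≤ w := le_of_mem_P (hstep.2 ▸ htl)
    have hzpos : 0 < p m g r z := lt_of_le_of_lt (Nat.zero_le _) (lt_p hstep.1)
    have hw : pdef m g r w := by
      by_contra hnd
      have : p m g r w = 0 := by
        simp [p, Set.not_nonempty_iff_eq_empty.mp hnd]
      omega
    have := lt_p hw
    omega

lemma mem_P_cases (h : b ∈ P m g r k) : b = k ∨ (1 ≤ b ∧ b ≤ m) := by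
  rcases (Relation.ReflTransGen.cases_tail h) with h | ⟨c, _, hstep⟩
  · exact Or.inl h
  · have := p_mem hstep.1
    rw [hstep.2]
    exact Or.inr ⟨Nat.one_le_iff_ne_zero.mpr
      ((lt_of_le_of_lt (Nat.zero_le _) this.2.1)).ne', this.1⟩

lemma p_eq_zero (hnd : ¬ pdef m g r k) : p m g r k = 0 := by
  simp [p, Set.not_nonempty_iff_eq_empty.mp hnd]

lemma pdef_of_p_pos (h : 0 < p m g r k) : pdef m g r k := by
  by_contra hnd; rw [p_eq_zero hnd] at h; omega

lemma mem_chainFin (hkm : k ≤ m) {b : ℕ} (hb : b ∈ P m g r k) :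
    b ∈ (insert k (Finset.Icc 1 m)).filter (· ∈ P m g r k) := by
  rw [Finset.mem_filter, Finset.mem_insert]
  rcases mem_P_cases hb with h | h
  · exact ⟨Or.inl h, hb⟩
  · exact ⟨Or.inr (Finset.mem_Icc.mpr h), hb⟩

lemma exists_root (k : ℕ) (hkm : k ≤ m) :
    ∃ x, x ∈ P m g r k ∧ ¬ pdef m g r x := by
  set F := (insert k (Finset.Icc 1 m)).filter (· ∈ P m g r k) with hF
  have hne : F.Nonempty := ⟨k, mem_chainFin hkm (P_refl k)⟩
  refine ⟨F.max' hne, (Finset.mem_filter.mp (F.max'_mem hne)).2, ?_⟩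
  intro hd
  have hmem : p m g r (F.max' hne) ∈ P m g r k :=
    p_mem_P (Finset.mem_filter.mp (F.max'_mem hne)).2 hd
  have := Finset.le_max' F _ (mem_chainFin hkm hmem)
  have := lt_p hd
  omega

lemma exists_max_below (hkm : k ≤ m) (hz : k < z) :
    ∃ x, x ∈ P m g r k ∧ x < z ∧ ∀ b ∈ P m g r k, b < z → b ≤ x := by
  set F := ((insert k (Finset.Icc 1 m)).filter (· ∈ P m g r k)).filter (· < z) with hF
  have hne : F.Nonempty := ⟨k, Finset.mem_filter.mpr ⟨mem_chainFin hkm (P_refl k), hz⟩⟩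
  have hmm := Finset.mem_filter.mp (F.max'_mem hne)
  refine ⟨F.max' hne, (Finset.mem_filter.mp hmm.1).2, hmm.2, ?_⟩
  intro b hb hbz
  exact Finset.le_max' F b (Finset.mem_filter.mpr ⟨mem_chainFin hkm hb, hbz⟩)

lemma mem_T_iff {z k : ℕ} : z ∈ T m g r k ↔ z = k ∨ ∃ w ∈ P m g r k, z ∈ y m g r w := by
  simp [T, Set.mem_union, Set.mem_iUnion, Set.mem_singleton_iff]

lemma k_mem_T (k : ℕ) : k ∈ T m g r k := mem_T_iff.mpr (Or.inl rfl)

lemma T_lt (hkm : k ≤ m) (hzT : z ∈ T m g r k) : z = k ∨ (1 ≤ z ∧ z ≤ m ∧ z < k) := by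
  rcases mem_T_iff.mp hzT with h | ⟨w, hwP, hzy⟩
  · exact Or.inl h
  obtain ⟨hz1, hzm, hzw, hpzw⟩ := hzy
  by_cases hzk : z < k
  · exact Or.inr ⟨hz1, hzm, hzk⟩
  by_cases hzk' : z = k
  · exact Or.inl hzk'
  exfalso
  have hkz : k < z := by omega
  have hznP : z ∉ P m g r k := by
    intro hzP
    rcases P_total hzP hwP with h | h
    · exact absurd (le_of_mem_P h) (not_le.mpr hzw)
    · exact not_mem_P_of_sib hzw hpzw h
  obtain ⟨x, hxP, hxz, hxmax⟩ := exists_max_below hkm hkz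
  have hwx : w ∉ P m g r x → False := by
    intro h
    rcases P_total hwP hxP with h' | h'
    · exact h h'
    · exact absurd (le_of_mem_P h') (by omega)
  have hdx : pdef m g r x := by
    by_contra hnd
    exact hwx (fun h => absurd (P_singleton hnd h) (by
      have := le_of_mem_P hwP
      omega))
  have hpxP : p m g r x ∈ P m g r k := p_mem_P hxP hdx
  have hxpx : x < p m g r x := lt_p hdx
  have hpxz : z < p m g r x := by
    rcases Nat.lt_trichotomy (p m g r x) z with h | h | h
    · exact absurd (hxmax _ hpxP h) (by omega)
    · exact absurd (h ▸ hpxP) hznP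
    · exact h
  obtain ⟨hdz, hpz_le⟩ := pdef_of_between hdx hxz hpxz
  have hwPx : w ∈ P m g r x := by
    by_contra h; exact hwx h
  have hpxw : p m g r x ≤ w := by
    rcases Relation.ReflTransGen.cases_head hwPx with h | ⟨c, hstep, htl⟩
    · omega
    · rw [hstep.2] at htl; exact le_of_mem_P htl
  have hdw : pdef m g r w := pdef_of_p_pos (by
    have : 0 < p m g r z := lt_of_le_of_lt (Nat.zero_le _) (lt_p hdz)
    omega)
  have := lt_p hdw
  omega

lemma cover (ht1 : 1 ≤ t) (htk : t ≤ k) (hkm : k ≤ m) :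
    ∃ j, j ∈ T m g r k ∧ j ∈ P m g r t := by
  by_cases hkP : k ∈ P m g r t
  · exact ⟨k, k_mem_T k, hkP⟩
  have htk' : t < k := lt_of_le_of_ne htk (fun h => hkP (h ▸ P_refl t))
  obtain ⟨u, huP, huk, humax⟩ := exists_max_below (le_trans htk hkm) htk'
  have hu1 : 1 ≤ u := le_trans ht1 (le_of_mem_P huP)
  have hum : u ≤ m := by omega
  by_cases hdu : pdef m g r u
  · have hpuP : p m g r u ∈ P m g r t := p_mem_P huP hdu
    have hupu : u < p m g r u := lt_p hdu
    have hkpu : k < p m g r u := by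
      rcases Nat.lt_trichotomy (p m g r u) k with h | h | h
      · exact absurd (humax _ hpuP h) (by omega)
      · exact absurd (h ▸ hpuP) hkP
      · exact h
    obtain ⟨x, hxP, hxpu, hxmax⟩ := exists_max_below hkm hkpu
    have hkx : k ≤ x := le_of_mem_P hxP
    obtain ⟨hdx, hpx_le⟩ := pdef_of_between hdu (by omega) hxpu
    have hpx_eq : p m g r x = p m g r u := by
      have hpxP : p m g r x ∈ P m g r k := p_mem_P hxP hdx
      have := lt_p hdx
      rcases Nat.lt_trichotomy (p m g r x) (p m g r u) with h | h | h
      · exact absurd (hxmax _ hpxP h) (by omega)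
      · exact h
      · omega
    exact ⟨u, mem_T_iff.mpr (Or.inr ⟨x, hxP, ⟨hu1, hum, by omega, by omega⟩⟩), huP⟩
  · obtain ⟨x, hxP, hndx⟩ := exists_root k hkm
    have hkx : k ≤ x := le_of_mem_P hxP
    exact ⟨u, mem_T_iff.mpr (Or.inr ⟨x, hxP,
      ⟨hu1, hum, by omega, by rw [p_eq_zero hdu, p_eq_zero hndx]⟩⟩), huP⟩

end StructuralLemmas

section ArithLemmas

lemma sum_filter_le_sum_filter {S : Finset ℕ} {f : ℕ → ℝ} (hf : ∀ z ∈ S, 0 ≤ f z)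
    (p q : ℕ → Prop) [DecidablePred p] [DecidablePred q] (h : ∀ z, p z → q z) :
    ∑ z ∈ S.filter p, f z ≤ ∑ z ∈ S.filter q, f z := by
  apply Finset.sum_le_sum_of_subset_of_nonneg
  · exact Finset.monotone_filter_right _ (fun z _ hz => h z hz)
  · intro z hz _; exact hf z (Finset.mem_filter.mp hz).1

lemma sum_biUnion_le' {α β : Type*} [DecidableEq α] [DecidableEq β] (F : Finset α)
    (t : α → Finset β) (f : β → ℝ) (hf : ∀ x ∈ F.biUnion t, 0 ≤ f x) :
    ∑ x ∈ F.biUnion t, f x ≤ ∑ a ∈ F, ∑ x ∈ t a, f x := by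
  induction F using Finset.cons_induction with
  | empty => simp
  | cons a F ha ih =>
    rw [Finset.cons_eq_insert] at *
    rw [Finset.biUnion_insert] at hf ⊢
    rw [Finset.sum_insert ha]
    have h1 := Finset.sum_union_inter (s₁ := t a) (s₂ := F.biUnion t) (f := f)
    have h2 : 0 ≤ ∑ x ∈ t a ∩ F.biUnion t, f x :=
      Finset.sum_nonneg fun x hx => hf x (Finset.mem_union_left _ (Finset.mem_inter.mp hx).1)
    have h3 := ih (fun x hx => hf x (Finset.mem_union_right _ hx))
    linarith

lemma sum_pow8 (m : ℕ) (r : ℕ → ℝ)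
    (hrpos : ∀ z, 1 ≤ z → z ≤ m → 0 < r z)
    (hrmono : ∀ i j, 1 ≤ i → i < j → j ≤ m → r i < r j)
    (hr8 : ∀ z, 1 ≤ z → z ≤ m → ∃ n : ℤ, r z = (8 : ℝ) ^ n) :
    ∀ (n : ℕ) (F : Finset ℕ) (K : ℕ), F.card ≤ n → 1 ≤ K → K ≤ m →
      (∀ z ∈ F, 1 ≤ z ∧ z < K) → (∑ z ∈ F, r z) ≤ r K / 7 := by
  have key : ∀ z K, 1 ≤ z → z < K → K ≤ m → 8 * r z ≤ r K := by
    intro z K hz1 hzK hKm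
    obtain ⟨a, ha⟩ := hr8 z hz1 (by omega)
    obtain ⟨b, hb⟩ := hr8 K (by omega) hKm
    have hlt : r z < r K := hrmono z K hz1 hzK hKm
    rw [ha, hb] at hlt ⊢
    have h8 : (1:ℝ) < 8 := by norm_num
    have hab : a < b := (zpow_lt_zpow_iff_right₀ h8).mp hlt
    have heq : (8:ℝ) * 8 ^ a = 8 ^ (a + 1) := by
      rw [zpow_add_one₀ (by norm_num : (8:ℝ) ≠ 0)]; ring
    rw [heq]
    exact zpow_le_zpow_right₀ (by norm_num) (by omega)
  intro n
  induction n with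
  | zero =>
    intro F K hcard hK1 hKm hF
    rw [Finset.card_eq_zero.mp (Nat.le_zero.mp hcard)]
    simp only [Finset.sum_empty]
    have := hrpos K hK1 hKm; linarith
  | succ n ih =>
    intro F K hcard hK1 hKm hF
    rcases F.eq_empty_or_nonempty with rfl | hne
    · simp only [Finset.sum_empty]
      have := hrpos K hK1 hKm; linarith
    · set z1 := F.max' hne with hz1def
      have hz1F : z1 ∈ F := F.max'_mem hne
      have hz1 := hF z1 hz1F
      have hrec : ∑ z ∈ F.erase z1, r z ≤ r z1 / 7 := by
        apply ih (F.erase z1) z1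
        · have := Finset.card_erase_of_mem hz1F
          omega
        · exact hz1.1
        · omega
        · intro z hz
          refine ⟨(hF z (Finset.mem_of_mem_erase hz)).1, ?_⟩
          exact lt_of_le_of_ne (Finset.le_max' F z (Finset.mem_of_mem_erase hz))
            (Finset.ne_of_mem_erase hz)
      have hsum : ∑ z ∈ F, r z = r z1 + ∑ z ∈ F.erase z1, r z :=
        (Finset.add_sum_erase F r hz1F).symm
      have h8 : 8 * r z1 ≤ r K := key z1 K hz1.1 hz1.2 hKm
      rw [hsum]; linarith

section CnLemmas
variable {ι : Type*} {m : ℕ} {g r : ℕ → ℝ} {s : ι → ℝ} {X : Finset ι}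

lemma cn_self (zs : ℕ) : cn m g r s X zs zs = (⌈SH m g r s X zs / g zs⌉₊ : ℝ) := by
  simp [cn]

lemma cn_of_not_mem (zs z : ℕ) (h1 : z ≠ zs) (h2 : z ∉ T m g r zs) :
    cn m g r s X zs z = 0 := by
  simp [cn, h1, h2]

lemma cn_of_mem (zs z : ℕ) (h1 : z ≠ zs) (h2 : z ∈ T m g r zs) :
    cn m g r s X zs z =
      (if (∑ w ∈ (TIcc m g r zs).filter (fun w => z < w), SH m g r s X w)
            ≤ (⌈SH m g r s X zs / g zs⌉₊ : ℝ) * g zs ∧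
          (⌈SH m g r s X zs / g zs⌉₊ : ℝ) * g zs
            < (∑ w ∈ (TIcc m g r zs).filter (fun w => z ≤ w), SH m g r s X w) then
        ((∑ w ∈ (TIcc m g r zs).filter (fun w => z ≤ w), SH m g r s X w)
          - (⌈SH m g r s X zs / g zs⌉₊ : ℝ) * g zs) / g z
      else if (⌈SH m g r s X zs / g zs⌉₊ : ℝ) * g zs
            < (∑ w ∈ (TIcc m g r zs).filter (fun w => z < w), SH m g r s X w) then
        SH m g r s X z / g z
      else 0) := by
  simp [cn, h1, h2]

end CnLemmas

end ArithLemmas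

/-- Define `w' z := ⌈cn_{z⋄}(z)⌉` for every `z ∈ M`.  Then `w'`
is a feasible machine configuration for `𝒥`, and its cost satisfies
`∑_{z ∈ M} w' z · r z ≤ (8/7)·∑_{z ∈ T(z⋄)} cn_{z⋄}(z)·r z`. -/
theorem statement_11 {ι : Type*} (m : ℕ) (g r : ℕ → ℝ) (s : ι → ℝ) (𝒥 : Finset ι)
    (hm : 1 ≤ m)
    (hg1 : 0 < g 1) (hr1 : 0 < r 1)
    (hg : ∀ i j, 1 ≤ i → i < j → j ≤ m → g i < g j)
    (hr : ∀ i j, 1 ≤ i → i < j → j ≤ m → r i < r j)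
    (hr8 : ∀ z, 1 ≤ z → z ≤ m → ∃ n : ℤ, r z = (8 : ℝ) ^ n)
    (hJ : 𝒥.Nonempty)
    (hs : ∀ J ∈ 𝒥, 0 < s J ∧ s J ≤ g m) :
    Feasible m g s 𝒥 (fun z => ⌈cn m g r s 𝒥 (zdia m g r s 𝒥) z⌉₊) ∧
    cost m r (fun z => ⌈cn m g r s 𝒥 (zdia m g r s 𝒥) z⌉₊)
      ≤ 8 / 7 * (∑ z ∈ TIcc m g r (zdia m g r s 𝒥),
          cn m g r s 𝒥 (zdia m g r s 𝒥) z * r z) := by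
  classical
  have hgpos : ∀ z, 1 ≤ z → z ≤ m → 0 < g z := by
    intro z h1 h2
    rcases eq_or_lt_of_le h1 with h | h
    · rwa [← h]
    · exact lt_trans hg1 (hg 1 z le_rfl h h2)
  have hrpos : ∀ z, 1 ≤ z → z ≤ m → 0 < r z := by
    intro z h1 h2
    rcases eq_or_lt_of_le h1 with h | h
    · rwa [← h]
    · exact lt_trans hr1 (hr 1 z le_rfl h h2)
  have hmty : ∀ J ∈ 𝒥, 1 ≤ mty m g s J ∧ mty m g s J ≤ m := by
    intro J hJ'
    have h : mty m g s J ∈ {z | 1 ≤ z ∧ z ≤ m ∧ s J ≤ g z} :=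
      Nat.sInf_mem ⟨m, hm, le_rfl, (hs J hJ').2⟩
    exact ⟨h.1, h.2.1⟩
  set k0 := k0f m g s 𝒥 with hk0def
  obtain ⟨J0, hJ0, hJ0eq⟩ := Finset.exists_mem_eq_sup 𝒥 hJ (fun J => mty m g s J)
  have hk0J0 : k0 = mty m g s J0 := by rw [hk0def, k0f]; exact hJ0eq
  have hk01 : 1 ≤ k0 := hk0J0 ▸ (hmty J0 hJ0).1
  have hk0m : k0 ≤ m := by
    rw [hk0def, k0f]
    exact Finset.sup_le (fun J hJ' => (hmty J hJ').2)
  set zd := zdia m g r s 𝒥 with hzddef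
  have hzdset : zd ∈ {zs | zs ∈ P m g r k0 ∧ decent m g r s 𝒥 zs} := by
    rw [hzddef, zdia, ← hk0def]
    apply Nat.sInf_mem
    obtain ⟨x, hxP, hxnd⟩ := exists_root (g := g) (r := r) k0 hk0m
    exact ⟨x, ⟨hxP, fun zt hzt hne => absurd (P_singleton hxnd hzt) hne⟩⟩
  have hzdP : zd ∈ P m g r k0 := hzdset.1
  have hk0zd : k0 ≤ zd := le_of_mem_P hzdP
  have hzd1 : 1 ≤ zd := le_trans hk01 hk0zd
  have hzdm : zd ≤ m := by
    rcases mem_P_cases hzdP with h | h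
    · omega
    · exact h.2
  set Tf := TIcc m g r zd with hTfdef
  have hmemTf : ∀ z, z ∈ Tf ↔ z ∈ T m g r zd := by
    intro z
    rw [hTfdef, TIcc]
    constructor
    · intro h; exact (Finset.mem_filter.mp h).2
    · intro h
      refine Finset.mem_filter.mpr ⟨?_, h⟩
      rcases T_lt hzdm h with h' | h'
      · exact Finset.mem_insert.mpr (Or.inl h')
      · exact Finset.mem_insert.mpr (Or.inr (Finset.mem_Icc.mpr ⟨h'.1, h'.2.1⟩))
  have hTfb : ∀ z ∈ Tf, 1 ≤ z ∧ z ≤ m ∧ z ≤ zd := by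
    intro z hz
    rcases T_lt hzdm ((hmemTf z).mp hz) with h | h
    · exact ⟨h ▸ hzd1, h ▸ hzdm, le_of_eq h⟩
    · exact ⟨h.1, h.2.1, le_of_lt h.2.2⟩
  have hzdTf : zd ∈ Tf := (hmemTf zd).mpr (k_mem_T zd)
  set SHf : ℕ → ℝ := fun z => SH m g r s 𝒥 z with hSHdef
  have hSHnn : ∀ z, 0 ≤ SHf z := by
    intro z
    simp only [hSHdef, SH, Ssum, H]
    apply Finset.sum_nonneg
    intro J hJ'
    exact le_of_lt (hs J (Finset.mem_filter.mp hJ').1).1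
  have hgzd : 0 < g zd := hgpos zd hzd1 hzdm
  set B : ℝ := (⌈SHf zd / g zd⌉₊ : ℝ) * g zd with hBdef
  have hBSH : SHf zd ≤ B := by
    rw [hBdef]
    exact (div_le_iff₀ hgzd).mp (Nat.le_ceil _)
  have hB0 : 0 ≤ B := le_trans (hSHnn zd) hBSH
  set Sge : ℕ → ℝ := fun i => ∑ z ∈ Tf.filter (fun z => i ≤ z), SHf z with hSgedef
  set Sgt : ℕ → ℝ := fun i => ∑ z ∈ Tf.filter (fun z => i < z), SHf z with hSgtdef
  have hczd : cn m g r s 𝒥 zd zd * g zd = B := by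
    rw [cn_self, hBdef]
  have hcnTf : ∀ z ∈ Tf, z ≠ zd →
      cn m g r s 𝒥 zd z * g z =
        (if Sgt z ≤ B ∧ B < Sge z then Sge z - B
         else if B < Sgt z then SHf z else 0) := by
    intro z hz hne
    have hb := hTfb z hz
    have hgz : g z ≠ 0 := ne_of_gt (hgpos z hb.1 hb.2.1)
    rw [cn_of_mem zd z hne ((hmemTf z).mp hz)]
    simp only [hSgtdef, hSgedef, hBdef, hSHdef, hTfdef]
    split_ifs with h1 h2
    · rw [div_mul_cancel₀ _ hgz]
    · rw [div_mul_cancel₀ _ hgz]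
    · rw [zero_mul]
  have hcnmul : ∀ z ∈ Tf, 0 ≤ cn m g r s 𝒥 zd z * g z := by
    intro z hz
    by_cases h1 : z = zd
    · rw [h1, hczd]; exact hB0
    · rw [hcnTf z hz h1]
      split_ifs with h2 h3
      · linarith [h2.2]
      · exact hSHnn z
      · exact le_rfl
  have hcn_nn : ∀ z ∈ Tf, 0 ≤ cn m g r s 𝒥 zd z := by
    intro z hz
    have hb := hTfb z hz
    have hgz : 0 < g z := hgpos z hb.1 hb.2.1
    by_contra hcon
    push_neg at hcon
    have := mul_neg_of_neg_of_pos hcon hgz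
    linarith [hcnmul z hz]
  have hSgt_succ : ∀ i, Sgt i = Sge (i + 1) := by
    intro i
    simp only [hSgtdef, hSgedef]
    refine Finset.sum_congr ?_ (fun _ _ => rfl)
    ext z
    simp only [Finset.mem_filter]
    constructor
    · rintro ⟨h1, h2⟩; exact ⟨h1, by omega⟩
    · rintro ⟨h1, h2⟩; exact ⟨h1, by omega⟩
  have hSgt_empty : ∀ i, zd ≤ i → Sgt i = 0 := by
    intro i hi
    simp only [hSgtdef]
    have h : Tf.filter (fun z => i < z) = ∅ :=
      Finset.filter_eq_empty_iff.mpr (fun z hz => by have := hTfb z hz; omega)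
    rw [h, Finset.sum_empty]
  have hSge_empty : ∀ i, zd < i → Sge i = 0 := by
    intro i hi
    simp only [hSgedef]
    have h : Tf.filter (fun z => i ≤ z) = ∅ :=
      Finset.filter_eq_empty_iff.mpr (fun z hz => by have := hTfb z hz; omega)
    rw [h, Finset.sum_empty]
  have hSge_split : ∀ i, i ∈ Tf → Sge i = SHf i + Sgt i := by
    intro i hi
    simp only [hSgedef, hSgtdef]
    have h : Tf.filter (fun z => i ≤ z) = insert i (Tf.filter (fun z => i < z)) := by
      ext z
      simp only [Finset.mem_filter, Finset.mem_insert]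
      constructor
      · rintro ⟨h1, h2⟩
        rcases eq_or_lt_of_le h2 with h3 | h3
        · exact Or.inl h3.symm
        · exact Or.inr ⟨h1, h3⟩
      · rintro (rfl | ⟨h1, h2⟩)
        · exact ⟨hi, le_rfl⟩
        · exact ⟨h1, le_of_lt h2⟩
    rw [h, Finset.sum_insert (by simp)]
  have hSge_notmem : ∀ i, i ∉ Tf → Sge i = Sgt i := by
    intro i hi
    simp only [hSgedef, hSgtdef]
    refine Finset.sum_congr ?_ (fun _ _ => rfl)
    ext z
    simp only [Finset.mem_filter]
    constructor
    · rintro ⟨h1, h2⟩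
      refine ⟨h1, lt_of_le_of_ne h2 ?_⟩
      rintro rfl; exact hi h1
    · rintro ⟨h1, h2⟩; exact ⟨h1, le_of_lt h2⟩
  have hheart : ∀ i, 1 ≤ i →
      Sge i ≤ ∑ z ∈ Tf.filter (fun z => i ≤ z), cn m g r s 𝒥 zd z * g z := by
    by_cases hbd : ∃ is ∈ Tf, is ≠ zd ∧ Sgt is ≤ B ∧ B < Sge is
    · obtain ⟨is, hisTf, hisne, hisgt, hisge⟩ := hbd
      have hislt : is < zd := by
        rcases T_lt hzdm ((hmemTf is).mp hisTf) with h | h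
        · exact absurd h hisne
        · exact h.2.2
      have cval : ∀ z ∈ Tf, cn m g r s 𝒥 zd z * g z =
          (if z = zd then B else if z = is then Sge is - B
           else if z < is then SHf z else 0) := by
        intro z hz
        by_cases h1 : z = zd
        · rw [if_pos h1, h1, hczd]
        rw [if_neg h1, hcnTf z hz h1]
        by_cases h2 : z = is
        · rw [if_pos h2, h2, if_pos ⟨hisgt, hisge⟩]
        rw [if_neg h2]
        by_cases h3 : z < is
        · have hle : Sge is ≤ Sgt z := by
            simp only [hSgedef, hSgtdef]
            exact sum_filter_le_sum_filter (fun w _ => hSHnn w) _ _ (fun w hw => by omega)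
          rw [if_neg (fun hcon => absurd hcon.1
              (not_le.mpr (lt_of_lt_of_le hisge hle))),
            if_pos (lt_of_lt_of_le hisge hle), if_pos h3]
        · have hzis : is < z := by omega
          have hA : Sge z ≤ Sgt is := by
            simp only [hSgedef, hSgtdef]
            exact sum_filter_le_sum_filter (fun w _ => hSHnn w) _ _ (fun w hw => by omega)
          have hBn : Sgt z ≤ Sge z := by
            simp only [hSgedef, hSgtdef]
            exact sum_filter_le_sum_filter (fun w _ => hSHnn w) _ _ (fun w hw => le_of_lt hw)
          rw [if_neg (fun hcon => absurd hcon.2 (not_lt.mpr (le_trans hA hisgt))),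
            if_neg (not_lt.mpr (le_trans hBn (le_trans hA hisgt))), if_neg h3]
      intro i hi
      by_cases hizd : i ≤ zd
      swap
      · rw [hSge_empty i (by omega)]
        exact Finset.sum_nonneg (fun z hz => hcnmul z (Finset.mem_filter.mp hz).1)
      by_cases hiis : i ≤ is
      swap
      · have hzero : ∀ z ∈ Tf.filter (fun z => i ≤ z), z ≠ zd →
            cn m g r s 𝒥 zd z * g z = 0 := by
          intro z hz hne
          obtain ⟨hzTf, hiz⟩ := Finset.mem_filter.mp hz
          rw [cval z hzTf, if_neg hne, if_neg (by omega : ¬ z = is),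
            if_neg (by omega : ¬ z < is)]
        rw [Finset.sum_eq_single_of_mem zd (Finset.mem_filter.mpr ⟨hzdTf, hizd⟩) hzero, hczd]
        have hle2 : Sge i ≤ Sgt is := by
          simp only [hSgedef, hSgtdef]
          exact sum_filter_le_sum_filter (fun w _ => hSHnn w) _ _ (fun w hw => by omega)
        exact le_trans hle2 hisgt
      · have hfilter2 : (Tf.filter (fun z => i ≤ z)).filter (fun z => ¬ z < is)
            = Tf.filter (fun z => is ≤ z) := by
          rw [Finset.filter_filter]
          ext z
          simp only [Finset.mem_filter]
          constructor
          · rintro ⟨h1, h2, h3⟩; exact ⟨h1, by omega⟩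
          · rintro ⟨h1, h2⟩; exact ⟨h1, by omega, by omega⟩
        have hcsplit : ∑ z ∈ Tf.filter (fun z => i ≤ z), cn m g r s 𝒥 zd z * g z
            = ∑ z ∈ (Tf.filter (fun z => i ≤ z)).filter (fun z => z < is),
                cn m g r s 𝒥 zd z * g z
              + ∑ z ∈ (Tf.filter (fun z => i ≤ z)).filter (fun z => ¬ z < is),
                cn m g r s 𝒥 zd z * g z :=
          (Finset.sum_filter_add_sum_filter_not _ _ _).symm
        have hssplit : Sge i
            = ∑ z ∈ (Tf.filter (fun z => i ≤ z)).filter (fun z => z < is), SHf z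
              + ∑ z ∈ (Tf.filter (fun z => i ≤ z)).filter (fun z => ¬ z < is), SHf z := by
          simp only [hSgedef]
          exact (Finset.sum_filter_add_sum_filter_not _ _ _).symm
        have hlow : ∑ z ∈ (Tf.filter (fun z => i ≤ z)).filter (fun z => z < is),
              cn m g r s 𝒥 zd z * g z
            = ∑ z ∈ (Tf.filter (fun z => i ≤ z)).filter (fun z => z < is), SHf z := by
          apply Finset.sum_congr rfl
          intro z hz
          simp only [Finset.mem_filter] at hz
          rw [cval z hz.1.1, if_neg (by omega : ¬ z = zd),
            if_neg (by omega : ¬ z = is), if_pos hz.2]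
        have hhighc : ∑ z ∈ Tf.filter (fun z => is ≤ z), cn m g r s 𝒥 zd z * g z
            = Sge is := by
          have hpairsub : ({is, zd} : Finset ℕ) ⊆ Tf.filter (fun z => is ≤ z) := by
            intro z hz
            rcases Finset.mem_insert.mp hz with rfl | hz'
            · exact Finset.mem_filter.mpr ⟨hisTf, le_rfl⟩
            · rw [Finset.mem_singleton.mp hz']
              exact Finset.mem_filter.mpr ⟨hzdTf, by omega⟩
          have hzero2 : ∀ z ∈ Tf.filter (fun z => is ≤ z),
              z ∉ ({is, zd} : Finset ℕ) → cn m g r s 𝒥 zd z * g z = 0 := by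
            intro z hz hnz
            obtain ⟨hzTf, hisz⟩ := Finset.mem_filter.mp hz
            simp only [Finset.mem_insert, Finset.mem_singleton] at hnz
            push_neg at hnz
            rw [cval z hzTf, if_neg hnz.2, if_neg hnz.1, if_neg (by omega)]
          rw [← Finset.sum_subset hpairsub hzero2,
            Finset.sum_pair (by omega : is ≠ zd),
            cval is hisTf, if_neg hisne, if_pos rfl, cval zd hzdTf, if_pos rfl]
          ring
        have hhighS : ∑ z ∈ Tf.filter (fun z => is ≤ z), SHf z = Sge is := by
          simp only [hSgedef]
        rw [hssplit, hcsplit, hlow, hfilter2, hhighc, hhighS]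
    · push_neg at hbd
      have key : ∀ n i, zd ≤ i + n → Sgt i ≤ B := by
        intro n
        induction n with
        | zero => intro i hi; rw [hSgt_empty i (by omega)]; exact hB0
        | succ n ih =>
          intro i hi
          by_cases hzi : zd ≤ i
          · rw [hSgt_empty i hzi]; exact hB0
          · rw [hSgt_succ i]
            by_cases hmem : (i + 1) ∈ Tf
            · by_cases heq : i + 1 = zd
              · rw [hSge_split _ hmem, heq, hSgt_empty zd le_rfl, add_zero]
                exact hBSH
              · exact hbd (i + 1) hmem heq (ih (i + 1) (by omega))
            · rw [hSge_notmem _ hmem]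
              exact ih (i + 1) (by omega)
      have hcn0 : ∀ z ∈ Tf, z ≠ zd → cn m g r s 𝒥 zd z * g z = 0 := by
        intro z hz hne
        have hk := key zd z (by omega)
        rw [hcnTf z hz hne,
          if_neg (fun hcon => absurd (hbd z hz hne hk) (not_le.mpr hcon.2)),
          if_neg (not_lt.mpr hk)]
      intro i hi
      by_cases hizd : i ≤ zd
      · rw [Finset.sum_eq_single_of_mem zd (Finset.mem_filter.mpr ⟨hzdTf, hizd⟩)
          (fun z hz hne => hcn0 z (Finset.mem_filter.mp hz).1 hne), hczd]
        obtain ⟨i', rfl⟩ : ∃ i', i = i' + 1 := ⟨i - 1, by omega⟩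
        rw [← hSgt_succ i']
        exact key zd i' (by omega)
      · rw [hSge_empty i (by omega)]
        exact Finset.sum_nonneg (fun z hz => hcnmul z (Finset.mem_filter.mp hz).1)
  have hfeas : Feasible m g s 𝒥 (fun z => ⌈cn m g r s 𝒥 zd z⌉₊) := by
    intro i hi1 him
    have hstep1 : Ssum s (𝒥.filter (fun J => i ≤ mty m g s J)) ≤ Sge i := by
      have hsub : 𝒥.filter (fun J => i ≤ mty m g s J) ⊆
          (Tf.filter (fun z => i ≤ z)).biUnion (fun z => H m g r s z 𝒥) := by
        intro J hJ'
        obtain ⟨hJm, hiJ⟩ := Finset.mem_filter.mp hJ'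
        have ht := hmty J hJm
        have htk0 : mty m g s J ≤ k0 := by
          rw [hk0def, k0f]
          exact Finset.le_sup (f := fun J => mty m g s J) hJm
        obtain ⟨j, hjT, hjP⟩ := cover ht.1 (le_trans htk0 hk0zd) hzdm
        refine Finset.mem_biUnion.mpr ⟨j, Finset.mem_filter.mpr ⟨(hmemTf j).mpr hjT,
          le_trans hiJ (le_of_mem_P hjP)⟩, ?_⟩
        exact Finset.mem_filter.mpr ⟨hJm, ht.1, ht.2, hjP⟩
      calc Ssum s (𝒥.filter (fun J => i ≤ mty m g s J))
          ≤ ∑ J ∈ (Tf.filter (fun z => i ≤ z)).biUnion (fun z => H m g r s z 𝒥), s J := by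
            simp only [Ssum]
            apply Finset.sum_le_sum_of_subset_of_nonneg hsub
            intro J hJ' _
            obtain ⟨z, hz, hJz⟩ := Finset.mem_biUnion.mp hJ'
            exact le_of_lt (hs J (Finset.mem_filter.mp hJz).1).1
        _ ≤ ∑ z ∈ Tf.filter (fun z => i ≤ z), ∑ J ∈ H m g r s z 𝒥, s J := by
            apply sum_biUnion_le'
            intro J hJ'
            obtain ⟨z, hz, hJz⟩ := Finset.mem_biUnion.mp hJ'
            exact le_of_lt (hs J (Finset.mem_filter.mp hJz).1).1
        _ = Sge i := by simp only [hSgedef, hSHdef, SH, Ssum]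
    have hstep3 : ∑ z ∈ Tf.filter (fun z => i ≤ z), cn m g r s 𝒥 zd z * g z
        ≤ ∑ z ∈ Finset.Icc i m, (⌈cn m g r s 𝒥 zd z⌉₊ : ℝ) * g z := by
      calc ∑ z ∈ Tf.filter (fun z => i ≤ z), cn m g r s 𝒥 zd z * g z
          ≤ ∑ z ∈ Tf.filter (fun z => i ≤ z), (⌈cn m g r s 𝒥 zd z⌉₊ : ℝ) * g z := by
            apply Finset.sum_le_sum
            intro z hz
            obtain ⟨hzTf, _⟩ := Finset.mem_filter.mp hz
            have hb := hTfb z hzTf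
            exact mul_le_mul_of_nonneg_right (Nat.le_ceil _)
              (le_of_lt (hgpos z hb.1 hb.2.1))
        _ ≤ ∑ z ∈ Finset.Icc i m, (⌈cn m g r s 𝒥 zd z⌉₊ : ℝ) * g z := by
            apply Finset.sum_le_sum_of_subset_of_nonneg
            · intro z hz
              obtain ⟨hzTf, hiz⟩ := Finset.mem_filter.mp hz
              exact Finset.mem_Icc.mpr ⟨hiz, (hTfb z hzTf).2.1⟩
            · intro z hz _
              obtain ⟨h1, h2⟩ := Finset.mem_Icc.mp hz
              exact mul_nonneg (Nat.cast_nonneg _) (le_of_lt (hgpos z (by omega) h2))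
    exact le_trans hstep1 (le_trans (hheart i hi1) hstep3)
  have hTfIcc : Tf ⊆ Finset.Icc 1 m :=
    fun z hz => Finset.mem_Icc.mpr ⟨(hTfb z hz).1, (hTfb z hz).2.1⟩
  have hcost1 : cost m r (fun z => ⌈cn m g r s 𝒥 zd z⌉₊)
      = ∑ z ∈ Tf, (⌈cn m g r s 𝒥 zd z⌉₊ : ℝ) * r z := by
    simp only [cost]
    refine (Finset.sum_subset hTfIcc ?_).symm
    intro z hz hnz
    have hnzd : z ≠ zd := fun h => hnz (h ▸ hzdTf)
    have hnT : z ∉ T m g r zd := fun h => hnz ((hmemTf z).mpr h)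
    rw [cn_of_not_mem zd z hnzd hnT, Nat.ceil_zero]
    simp
  have hceil_zd : (⌈cn m g r s 𝒥 zd zd⌉₊ : ℝ) = cn m g r s 𝒥 zd zd := by
    rw [cn_self, Nat.ceil_natCast]
  have hsplitc : ∑ z ∈ Tf, (⌈cn m g r s 𝒥 zd z⌉₊ : ℝ) * r z
      = ∑ z ∈ Tf.filter (fun z => z ≠ zd ∧ 0 < cn m g r s 𝒥 zd z),
          (⌈cn m g r s 𝒥 zd z⌉₊ : ℝ) * r z
        + ∑ z ∈ Tf.filter (fun z => ¬ (z ≠ zd ∧ 0 < cn m g r s 𝒥 zd z)),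
          (⌈cn m g r s 𝒥 zd z⌉₊ : ℝ) * r z :=
    (Finset.sum_filter_add_sum_filter_not _ _ _).symm
  have hnotP : ∑ z ∈ Tf.filter (fun z => ¬ (z ≠ zd ∧ 0 < cn m g r s 𝒥 zd z)),
        (⌈cn m g r s 𝒥 zd z⌉₊ : ℝ) * r z
      = ∑ z ∈ Tf.filter (fun z => ¬ (z ≠ zd ∧ 0 < cn m g r s 𝒥 zd z)),
        cn m g r s 𝒥 zd z * r z := by
    apply Finset.sum_congr rfl
    intro z hz
    obtain ⟨hzTf, hnp⟩ := Finset.mem_filter.mp hz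
    push_neg at hnp
    by_cases h1 : z = zd
    · rw [h1, hceil_zd]
    · have h0 : cn m g r s 𝒥 zd z = 0 := le_antisymm (hnp h1) (hcn_nn z hzTf)
      rw [h0, Nat.ceil_zero]
      simp
  have hposP : ∑ z ∈ Tf.filter (fun z => z ≠ zd ∧ 0 < cn m g r s 𝒥 zd z),
        (⌈cn m g r s 𝒥 zd z⌉₊ : ℝ) * r z
      ≤ ∑ z ∈ Tf.filter (fun z => z ≠ zd ∧ 0 < cn m g r s 𝒥 zd z),
          cn m g r s 𝒥 zd z * r z
        + ∑ z ∈ Tf.filter (fun z => z ≠ zd ∧ 0 < cn m g r s 𝒥 zd z), r z := by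
    rw [← Finset.sum_add_distrib]
    apply Finset.sum_le_sum
    intro z hz
    obtain ⟨hzTf, hp⟩ := Finset.mem_filter.mp hz
    have hb := hTfb z hzTf
    have hrz : 0 ≤ r z := le_of_lt (hrpos z hb.1 hb.2.1)
    have hcl : (⌈cn m g r s 𝒥 zd z⌉₊ : ℝ) ≤ cn m g r s 𝒥 zd z + 1 :=
      le_of_lt (Nat.ceil_lt_add_one (hcn_nn z hzTf))
    have := mul_le_mul_of_nonneg_right hcl hrz
    linarith
  have hrecomb : ∑ z ∈ Tf.filter (fun z => z ≠ zd ∧ 0 < cn m g r s 𝒥 zd z),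
        cn m g r s 𝒥 zd z * r z
      + ∑ z ∈ Tf.filter (fun z => ¬ (z ≠ zd ∧ 0 < cn m g r s 𝒥 zd z)),
        cn m g r s 𝒥 zd z * r z
      = ∑ z ∈ Tf, cn m g r s 𝒥 zd z * r z :=
    Finset.sum_filter_add_sum_filter_not _ _ _
  have h8sum : ∑ z ∈ Tf.filter (fun z => z ≠ zd ∧ 0 < cn m g r s 𝒥 zd z), r z
      ≤ r zd / 7 := by
    apply sum_pow8 m r hrpos hr hr8
      (Tf.filter (fun z => z ≠ zd ∧ 0 < cn m g r s 𝒥 zd z)).card _ zd le_rfl hzd1 hzdm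
    intro z hz
    obtain ⟨hzTf, hp⟩ := Finset.mem_filter.mp hz
    have hb := hTfb z hzTf
    exact ⟨hb.1, lt_of_le_of_ne hb.2.2 hp.1⟩
  have hSHzdpos : 0 < SHf zd := by
    simp only [hSHdef, SH, Ssum, H]
    apply Finset.sum_pos'
    · intro J hJ'
      exact le_of_lt (hs J (Finset.mem_filter.mp hJ').1).1
    · refine ⟨J0, Finset.mem_filter.mpr ⟨hJ0, ?_⟩, (hs J0 hJ0).1⟩
      exact (show mty m g s J0 ∈ A m g r zd from hk0J0 ▸ ⟨hk01, hk0m, hzdP⟩)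
  have hone : (1:ℝ) ≤ cn m g r s 𝒥 zd zd := by
    rw [cn_self]
    have h1 : 1 ≤ ⌈SH m g r s 𝒥 zd / g zd⌉₊ :=
      Nat.one_le_ceil_iff.mpr (div_pos (by simpa [hSHdef] using hSHzdpos) hgzd)
    exact_mod_cast h1
  have hrzd : 0 < r zd := hrpos zd hzd1 hzdm
  have hXge : r zd ≤ ∑ z ∈ Tf, cn m g r s 𝒥 zd z * r z := by
    have h1 : r zd ≤ cn m g r s 𝒥 zd zd * r zd :=
      le_mul_of_one_le_left (le_of_lt hrzd) hone
    refine le_trans h1 (Finset.single_le_sum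
      (f := fun z => cn m g r s 𝒥 zd z * r z) ?_ hzdTf)
    intro z hz
    have hb := hTfb z hz
    exact mul_nonneg (hcn_nn z hz) (le_of_lt (hrpos z hb.1 hb.2.1))
  refine ⟨hfeas, ?_⟩
  rw [hcost1, hsplitc, hnotP]
  linarith [hposP, h8sum, hXge, hrecomb]

end BSHM
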